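/- Let X be a family of subsets of a finite set E and M a loopless X-matroid on E. Suppose that for every connected flat F of M there is a proper X-sequence S with r_M(F) = val(F,S). Then r_M = val_X, and M is the unique maximal X-matroid on E in the weak order. -/

import Mathlib

open Set

variable {α : Type*}

/-- `C` is a circuit of `M`: a minimal dependent subset of the ground set. -/
def Matroid.IsCircuit' (M : Matroid α) (C : Set α) : Prop :=
  C ⊆ M.E ∧ ¬ M.Indep C ∧ ∀ e ∈ C, M.Indep (C \ {e})

/-- `M` is an `X`-matroid on `E`: a matroid with ground set `E` in which every member of the
family `X` is a circuit. -/
def IsXMatroid (E : Set α) (X : Set (Set α)) (M : Matroid α) : Prop :=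
  M.E = E ∧ ∀ C ∈ X, M.IsCircuit' C

/-- The union of a list of sets. -/
def unionList (S : List (Set α)) : Set α := ⋃ Y ∈ S, Y

/-- A proper `X`-sequence: a list of members of `X` such that no term is contained in the
union of the preceding terms. -/
def ProperSeq (X : Set (Set α)) (S : List (Set α)) : Prop :=
  (∀ Y ∈ S, Y ∈ X) ∧
  ∀ i : Fin S.length, 0 < i.1 → ¬ (S.get i ⊆ unionList (S.take i.1))

/-- `val(F, S) = |F ∪ ⋃ S| - |S|`. -/
noncomputable def valSeq (F : Set α) (S : List (Set α)) : ℤ :=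
  ((F ∪ unionList S).ncard : ℤ) - S.length

/-- `val_X(F)`: the minimum of `val(F, S)` over all proper `X`-sequences `S`. -/
noncomputable def valX (X : Set (Set α)) (F : Set α) : ℤ :=
  sInf {v : ℤ | ∃ S : List (Set α), ProperSeq X S ∧ v = valSeq F S}

/-- The rank of a set `F` in a matroid `M`: the largest size of an independent subset of `F`. -/
noncomputable def mrk (M : Matroid α) (F : Set α) : ℕ :=
  sSup {n : ℕ | ∃ I ⊆ F, M.Indep I ∧ I.ncard = n}

/-- The weak order on matroids: `M ⪯ N` iff every independent set of `M` is independent in `N`. -/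
def WeakLE (M N : Matroid α) : Prop := ∀ I : Set α, M.Indep I → N.Indep I

/-- A set `F` is connected in `M` if every two elements of `F` lie on a common circuit
contained in `F`. -/
def ConnectedSet (M : Matroid α) (F : Set α) : Prop :=
  ∀ e ∈ F, ∀ f ∈ F, ∃ C : Set α, M.IsCircuit' C ∧ e ∈ C ∧ f ∈ C ∧ C ⊆ F

section Helpers

variable {M : Matroid α} {X : Set (Set α)}

lemma unionList_nil : unionList ([] : List (Set α)) = ∅ := by simp [unionList]

lemma unionList_append (S T : List (Set α)) :
    unionList (S ++ T) = unionList S ∪ unionList T := by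
  ext x
  constructor
  · intro hx
    obtain ⟨Y, hY, hxY⟩ := by simpa [unionList] using hx
    rcases hY with h | h
    · exact Or.inl (by simp [unionList]; exact ⟨Y, h, hxY⟩)
    · exact Or.inr (by simp [unionList]; exact ⟨Y, h, hxY⟩)
  · intro hx
    rcases hx with h | h <;> obtain ⟨Y, hY, hxY⟩ := by simpa [unionList] using h
    · simp [unionList]; exact ⟨Y, Or.inl hY, hxY⟩
    · simp [unionList]; exact ⟨Y, Or.inr hY, hxY⟩

lemma mem_unionList {x : α} {S : List (Set α)} : x ∈ unionList S ↔ ∃ Y ∈ S, x ∈ Y := by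
  simp [unionList]

lemma unionList_subset {S : List (Set α)} {A : Set α} (h : ∀ Y ∈ S, Y ⊆ A) :
    unionList S ⊆ A := fun x hx => by
  obtain ⟨Y, hY, hxY⟩ := mem_unionList.mp hx; exact h Y hY hxY

lemma properSeq_nil : ProperSeq X ([] : List (Set α)) :=
  ⟨by simp, fun i _ => i.elim0⟩

lemma properSeq_append_last {S : List (Set α)} {Y : Set α} (h : ProperSeq X (S ++ [Y])) :
    ProperSeq X S ∧ Y ∈ X ∧ (S ≠ [] → ¬ Y ⊆ unionList S) := by
  obtain ⟨hmem, hprop⟩ := h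
  refine ⟨⟨fun Z hZ => hmem Z (by simp [hZ]), ?_⟩, hmem Y (by simp), ?_⟩
  · intro i hi
    have hlen : i.1 < (S ++ [Y]).length := by simp
    have h2 := hprop ⟨i.1, hlen⟩ hi
    have hget : (S ++ [Y]).get ⟨i.1, hlen⟩ = S.get i := by
      simp [List.get_eq_getElem, List.getElem_append_left i.2]
    have htake : (S ++ [Y]).take i.1 = S.take i.1 := by
      rw [List.take_append, Nat.sub_eq_zero_of_le i.2.le]
      simp
    rwa [hget, htake] at h2
  · intro hS hsub
    have hlen : S.length < (S ++ [Y]).length := by simp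
    have hpos : 0 < S.length := List.length_pos_iff.mpr hS
    have h2 := hprop ⟨S.length, hlen⟩ hpos
    have hget : (S ++ [Y]).get ⟨S.length, hlen⟩ = Y := by
      simp [List.get_eq_getElem, List.getElem_append_right (le_refl S.length)]
    have htake : (S ++ [Y]).take S.length = S := by
      rw [List.take_append]
      simp
    rw [hget, htake] at h2
    exact h2 hsub

lemma properSeq_append {S₁ S₂ : List (Set α)} {F₁ F₂ : Set α}
    (h1 : ProperSeq X S₁) (h2 : ProperSeq X S₂)
    (hne : ∀ Y ∈ S₂, Y.Nonempty)
    (hU1 : unionList S₁ ⊆ F₁) (hU2 : unionList S₂ ⊆ F₂) (hd : Disjoint F₁ F₂) :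
    ProperSeq X (S₁ ++ S₂) := by
  refine ⟨fun Z hZ => ?_, fun i hi => ?_⟩
  · rcases List.mem_append.mp hZ with h | h
    exacts [h1.1 Z h, h2.1 Z h]
  · rcases lt_or_ge i.1 S₁.length with hlt | hge
    · have hget : (S₁ ++ S₂).get i = S₁.get ⟨i.1, hlt⟩ := by
        simp [List.get_eq_getElem, List.getElem_append_left hlt]
      have htake : (S₁ ++ S₂).take i.1 = S₁.take i.1 := by
        rw [List.take_append, Nat.sub_eq_zero_of_le hlt.le]
        simp
      rw [hget, htake]; exact h1.2 ⟨i.1, hlt⟩ hi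
    · have hjlt : i.1 - S₁.length < S₂.length := by
        have := i.2; simp at this; omega
      have hget : (S₁ ++ S₂).get i = S₂.get ⟨i.1 - S₁.length, hjlt⟩ := by
        simp [List.get_eq_getElem, List.getElem_append_right hge]
      have htake : unionList ((S₁ ++ S₂).take i.1)
          = unionList S₁ ∪ unionList (S₂.take (i.1 - S₁.length)) := by
        rw [List.take_append, List.take_of_length_le hge, unionList_append]
      have hYmem : S₂.get ⟨i.1 - S₁.length, hjlt⟩ ∈ S₂ := S₂.get_mem _
      obtain ⟨y, hy, hynot⟩ :
          ∃ y ∈ S₂.get ⟨i.1 - S₁.length, hjlt⟩, y ∉ unionList (S₂.take (i.1 - S₁.length)) := by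
        rcases Nat.eq_zero_or_pos (i.1 - S₁.length) with h0 | hpos
        · obtain ⟨y, hy⟩ := hne _ hYmem
          refine ⟨y, hy, ?_⟩
          rw [h0]
          simp [unionList_nil]
        · exact not_subset.mp (h2.2 ⟨i.1 - S₁.length, hjlt⟩ hpos)
      rw [hget, htake]
      intro hsub
      have hyF2 : y ∈ F₂ := hU2 (mem_unionList.mpr ⟨_, hYmem, hy⟩)
      rcases hsub hy with h | h
      · exact hd.ne_of_mem (hU1 h) hyF2 rfl
      · exact hynot h

end Helpers

section Rank

variable {M : Matroid α}

lemma indep_ncard_le_mrk (hE : M.E.Finite) {I F : Set α} (hIF : I ⊆ F) (hF : F ⊆ M.E)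
    (hI : M.Indep I) : I.ncard ≤ mrk M F := by
  apply le_csSup
  · refine ⟨M.E.ncard, ?_⟩
    rintro n ⟨J, hJF, hJ, rfl⟩
    exact Set.ncard_le_ncard (hJF.trans hF) hE
  · exact ⟨I, hIF, hI, rfl⟩

lemma basis_ncard_eq_mrk (hE : M.E.Finite) {I F : Set α} (hI : M.IsBasis I F) :
    mrk M F = I.ncard := by
  have hF : F ⊆ M.E := hI.subset_ground
  apply le_antisymm
  · refine csSup_le ⟨0, ∅, empty_subset _, M.empty_indep, by simp⟩ ?_
    rintro n ⟨J, hJF, hJ, rfl⟩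
    obtain ⟨J', hJ', hJJ'⟩ := hJ.subset_isBasis_of_subset hJF hF
    have hcard : J'.encard = I.encard := hJ'.encard_eq_encard hI
    have hfin : J'.Finite := hE.subset (hJ'.indep.subset_ground)
    calc J.ncard ≤ J'.ncard := Set.ncard_le_ncard hJJ' hfin
    _ = I.ncard := by rw [Set.ncard_def, hcard, ← Set.ncard_def]
  · exact indep_ncard_le_mrk hE hI.subset hF hI.indep

lemma mrk_mono (hE : M.E.Finite) {F G : Set α} (hFG : F ⊆ G) (hG : G ⊆ M.E) :
    mrk M F ≤ mrk M G := by
  refine csSup_le ⟨0, ∅, empty_subset _, M.empty_indep, by simp⟩ ?_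
  rintro n ⟨J, hJF, hJ, rfl⟩
  exact indep_ncard_le_mrk hE (hJF.trans hFG) hG hJ

lemma mrk_le_ncard (hE : M.E.Finite) {F : Set α} (hF : F ⊆ M.E) : mrk M F ≤ F.ncard := by
  refine csSup_le ⟨0, ∅, empty_subset _, M.empty_indep, by simp⟩ ?_
  rintro n ⟨J, hJF, hJ, rfl⟩
  exact Set.ncard_le_ncard hJF (hE.subset hF)

lemma indep_mrk (hE : M.E.Finite) {I : Set α} (hI : M.Indep I) : mrk M I = I.ncard :=
  basis_ncard_eq_mrk hE hI.isBasis_self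

lemma indep_of_mrk_eq_ncard (hE : M.E.Finite) {F : Set α} (hF : F ⊆ M.E)
    (h : F.ncard ≤ mrk M F) : M.Indep F := by
  obtain ⟨I, hI⟩ := M.exists_isBasis F hF
  have h1 : mrk M F = I.ncard := basis_ncard_eq_mrk hE hI
  have : F = I := (Set.eq_of_subset_of_ncard_le hI.subset (by omega) (hE.subset hF)).symm
  rw [this]; exact hI.indep

lemma mrk_closure_eq (hE : M.E.Finite) {F : Set α} (hF : F ⊆ M.E) :
    mrk M (M.closure F) = mrk M F := by
  obtain ⟨I, hI⟩ := M.exists_isBasis F hF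
  rw [basis_ncard_eq_mrk hE hI, basis_ncard_eq_mrk hE hI.isBasis_closure_right]

lemma mrk_diff_of_mem_closure (hE : M.E.Finite) {F : Set α} {e : α} (hF : F ⊆ M.E)
    (he : e ∈ M.closure (F \ {e})) : mrk M F = mrk M (F \ {e}) := by
  obtain ⟨I, hI⟩ := M.exists_isBasis (F \ {e}) (diff_subset.trans hF)
  have hIF : M.IsBasis I F := by
    rw [Matroid.isBasis_iff_indep_subset_closure]
    refine ⟨hI.indep, hI.subset.trans diff_subset, fun x hx => ?_⟩
    rcases eq_or_ne x e with rfl | hne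
    · rwa [hI.closure_eq_closure]
    · exact hI.subset_closure ⟨hx, hne⟩
  rw [basis_ncard_eq_mrk hE hI, basis_ncard_eq_mrk hE hIF]

lemma subset_closure_of_mrk_le (hE : M.E.Finite) {F G : Set α} (hFG : F ⊆ G) (hG : G ⊆ M.E)
    (h : mrk M G ≤ mrk M F) : G ⊆ M.closure F := by
  obtain ⟨I, hI⟩ := M.exists_isBasis F (hFG.trans hG)
  obtain ⟨J, hJ, hIJ⟩ := hI.indep.subset_isBasis_of_subset (hI.subset.trans hFG) hG
  have h1 : mrk M F = I.ncard := basis_ncard_eq_mrk hE hI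
  have h2 : mrk M G = J.ncard := basis_ncard_eq_mrk hE hJ
  have : I = J := Set.eq_of_subset_of_ncard_le hIJ (by omega) (hE.subset hJ.indep.subset_ground)
  calc G ⊆ M.closure J := hJ.subset_closure
  _ = M.closure I := by rw [this]
  _ = M.closure F := hI.closure_eq_closure

lemma mrk_pos_of_loopless (hE : M.E.Finite) {F : Set α} (hF : F ⊆ M.E)
    (hloop : ∀ e ∈ M.E, M.Indep {e}) (hne : F.Nonempty) : 1 ≤ mrk M F := by
  obtain ⟨e, he⟩ := hne
  have := indep_ncard_le_mrk hE (singleton_subset_iff.mpr he) hF (hloop e (hF he))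
  simpa using this

lemma closure_empty_loopless (hloop : ∀ e ∈ M.E, M.Indep {e}) :
    M.closure (∅ : Set α) = ∅ := by
  ext e
  simp only [mem_empty_iff_false, iff_false]
  intro he
  have heE : e ∈ M.E := M.mem_ground_of_mem_closure he
  have hdep : M.Dep (insert e ∅) := M.empty_indep.insert_dep_iff.mpr ⟨he, notMem_empty e⟩
  rw [insert_empty_eq] at hdep
  exact hdep.not_indep (hloop e heE)

end Rank

section Circuits

variable {M : Matroid α}

lemma circuit_nonempty {C : Set α} (hC : M.IsCircuit' C) : C.Nonempty := by
  rcases C.eq_empty_or_nonempty with rfl | h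
  · exact absurd M.empty_indep hC.2.1
  · exact h

lemma circuit_mem_closure_diff {C : Set α} {e : α} (hC : M.IsCircuit' C) (he : e ∈ C) :
    e ∈ M.closure (C \ {e}) := by
  have hI : M.Indep (C \ {e}) := hC.2.2 e he
  have hins : insert e (C \ {e}) = C := insert_diff_singleton.trans (insert_eq_of_mem he)
  have hdep : M.Dep (insert e (C \ {e})) := by
    rw [hins]; exact ⟨hC.2.1, hC.1⟩
  exact (hI.insert_dep_iff.mp hdep).1

lemma exists_circuit_subset_aux (hE : M.E.Finite) :
    ∀ n (D : Set α), D.ncard ≤ n → D ⊆ M.E → ¬ M.Indep D →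
      ∃ C, C ⊆ D ∧ M.IsCircuit' C := by
  intro n
  induction n with
  | zero =>
    intro D hn hD hdep
    have : D = ∅ := (Set.ncard_eq_zero (hE.subset hD)).mp (le_antisymm hn (Nat.zero_le _))
    exact absurd (this ▸ M.empty_indep) hdep
  | succ n ih =>
    intro D hn hD hdep
    by_cases h : ∀ e ∈ D, M.Indep (D \ {e})
    · exact ⟨D, subset_rfl, hD, hdep, h⟩
    · push_neg at h
      obtain ⟨e, heD, hdep'⟩ := h
      have hlt : (D \ {e}).ncard < D.ncard :=
        Set.ncard_diff_singleton_lt_of_mem heD (hE.subset hD)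
      obtain ⟨C, hCD, hC⟩ := ih (D \ {e}) (by omega) (diff_subset.trans hD) hdep'
      exact ⟨C, hCD.trans diff_subset, hC⟩

lemma exists_circuit_subset (hE : M.E.Finite) {D : Set α} (hD : D ⊆ M.E)
    (hdep : ¬ M.Indep D) : ∃ C, C ⊆ D ∧ M.IsCircuit' C :=
  exists_circuit_subset_aux hE D.ncard D le_rfl hD hdep

lemma exists_fund_circuit (hE : M.E.Finite) {I : Set α} {e : α} (hI : M.Indep I)
    (he : e ∈ M.closure I) (heI : e ∉ I) :
    ∃ C, M.IsCircuit' C ∧ e ∈ C ∧ C ⊆ insert e I := by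
  have hdep : M.Dep (insert e I) := hI.insert_dep_iff.mpr ⟨he, heI⟩
  obtain ⟨C, hCD, hC⟩ := exists_circuit_subset hE hdep.subset_ground hdep.not_indep
  refine ⟨C, hC, ?_, hCD⟩
  by_contra heC
  have : C ⊆ I := fun x hx => by
    rcases hCD hx with rfl | h
    · exact absurd hx heC
    · exact h
  exact hC.2.1 (hI.subset this)

lemma circuit_ssubset_indep {C D : Set α} (hC : M.IsCircuit' C) (hDC : D ⊆ C) (hne : D ≠ C) :
    M.Indep D := by
  obtain ⟨x, hxC, hxD⟩ := exists_of_ssubset (ssubset_of_subset_of_ne hDC hne)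
  exact (hC.2.2 x hxC).subset (fun y hy => ⟨hDC hy, by rintro rfl; exact hxD hy⟩)

lemma strong_elim (hE : M.E.Finite) {C₁ C₂ : Set α} (h1 : M.IsCircuit' C₁)
    (h2 : M.IsCircuit' C₂) {e g : α} (he : e ∈ C₁) (hg1 : g ∈ C₁) (hg2 : g ∈ C₂)
    (he2 : e ∉ C₂) :
    ∃ C₃, M.IsCircuit' C₃ ∧ e ∈ C₃ ∧ C₃ ⊆ (C₁ ∪ C₂) \ {g} := by
  have heg : e ≠ g := by rintro rfl; exact he2 hg2
  set D := (C₁ ∪ C₂) \ {g} with hD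
  have hDE : D ⊆ M.E := diff_subset.trans (union_subset h1.1 h2.1)
  have heD : e ∈ D := ⟨Or.inl he, heg⟩
  have hsub1 : C₂ \ {g} ⊆ D \ {e} := fun x hx =>
    ⟨⟨Or.inr hx.1, hx.2⟩, by rintro rfl; exact he2 hx.1⟩
  have hgcl : g ∈ M.closure (D \ {e}) :=
    M.closure_subset_closure hsub1 (circuit_mem_closure_diff h2 hg2)
  have hsub2 : C₁ \ {e} ⊆ M.closure (D \ {e}) := by
    intro x hx
    rcases eq_or_ne x g with rfl | hxg
    · exact hgcl
    · exact M.subset_closure _ (diff_subset.trans hDE) ⟨⟨Or.inl hx.1, hxg⟩, hx.2⟩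
  have hecl : e ∈ M.closure (D \ {e}) := by
    have h3 : M.closure (C₁ \ {e}) ⊆ M.closure (D \ {e}) := by
      rw [← M.closure_closure (D \ {e})]
      exact M.closure_subset_closure hsub2
    exact h3 (circuit_mem_closure_diff h1 he)
  obtain ⟨I, hI⟩ := M.exists_isBasis (D \ {e}) (diff_subset.trans hDE)
  have hecl' : e ∈ M.closure I := by rwa [hI.closure_eq_closure]
  have heI : e ∉ I := fun h => (hI.subset h).2 rfl
  obtain ⟨C₃, hC₃, heC₃, hC₃sub⟩ := exists_fund_circuit hE hI.indep hecl' heI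
  refine ⟨C₃, hC₃, heC₃, hC₃sub.trans ?_⟩
  intro x hx
  rcases hx with rfl | h
  · exact heD
  · exact (hI.subset h).1

end Circuits

section Trans

variable {M : Matroid α}

lemma circuit_trans_aux (hE : M.E.Finite) :
    ∀ n : ℕ, ∀ C₁ C₂ : Set α, (C₁ ∪ C₂).ncard ≤ n →
      M.IsCircuit' C₁ → M.IsCircuit' C₂ → ∀ e f g : α, e ∈ C₁ → f ∈ C₂ → g ∈ C₁ → g ∈ C₂ →
      ∃ C, M.IsCircuit' C ∧ e ∈ C ∧ f ∈ C ∧ C ⊆ C₁ ∪ C₂ := by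
  intro n
  induction n using Nat.strong_induction_on with
  | _ n ih =>
  intro C₁ C₂ hn h1 h2 e f g he hf hg1 hg2
  have hfinU : (C₁ ∪ C₂).Finite := hE.subset (union_subset h1.1 h2.1)
  by_cases hfC1 : f ∈ C₁
  · exact ⟨C₁, h1, he, hfC1, subset_union_left⟩
  by_cases heC2 : e ∈ C₂
  · exact ⟨C₂, h2, heC2, hf, subset_union_right⟩
  -- strong eliminations
  obtain ⟨C₃, h3, heC₃, hC₃sub⟩ := strong_elim hE h1 h2 he hg1 hg2 heC2
  by_cases hfC₃ : f ∈ C₃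
  · exact ⟨C₃, h3, heC₃, hfC₃, hC₃sub.trans diff_subset⟩
  obtain ⟨C₃', h3', hfC₃', hC₃'sub⟩ := strong_elim hE h2 h1 hf hg2 hg1 hfC1
  by_cases heC₃' : e ∈ C₃'
  · refine ⟨C₃', h3', heC₃', hfC₃', ?_⟩
    exact hC₃'sub.trans (diff_subset.trans (by rw [union_comm]))
  -- C₃ not contained in C₁ : get h ∈ C₃ \ C₁ (so h ∈ C₂)
  have hgC₃ : g ∉ C₃ := fun h => (hC₃sub h).2 rfl
  have hC₃ne : ¬ C₃ ⊆ C₁ := by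
    intro hsub
    rcases eq_or_ne C₃ C₁ with rfl | hne
    · exact hgC₃ hg1
    · exact h3.2.1 (circuit_ssubset_indep h1 hsub hne)
  obtain ⟨h, hhC₃, hhC₁⟩ := not_subset.mp hC₃ne
  have hhC₂ : h ∈ C₂ := ((hC₃sub hhC₃).1).resolve_left hhC₁
  -- similarly for C₃'
  have hgC₃' : g ∉ C₃' := fun h => (hC₃'sub h).2 rfl
  have hC₃'ne : ¬ C₃' ⊆ C₂ := by
    intro hsub
    rcases eq_or_ne C₃' C₂ with rfl | hne
    · exact hgC₃' hg2
    · exact h3'.2.1 (circuit_ssubset_indep h2 hsub hne)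
  obtain ⟨h', hh'C₃', hh'C₂⟩ := not_subset.mp hC₃'ne
  have hh'C₁ : h' ∈ C₁ := by
    have := (hC₃'sub hh'C₃').1
    rw [union_comm] at this
    exact this.resolve_right hh'C₂
  by_cases hcase : C₁ \ C₂ ⊆ C₃
  · by_cases hcase' : C₂ \ C₁ ⊆ C₃'
    · -- both: use pair (C₃, C₃') with common element h
      have hhC₃' : h ∈ C₃' := hcase' ⟨hhC₂, hhC₁⟩
      have hsubU : C₃ ∪ C₃' ⊆ (C₁ ∪ C₂) \ {g} := by
        apply union_subset hC₃sub
        exact hC₃'sub.trans (by rw [union_comm])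
      have hlt : (C₃ ∪ C₃').ncard < n := by
        have h1' : (C₃ ∪ C₃').ncard ≤ ((C₁ ∪ C₂) \ {g}).ncard :=
          Set.ncard_le_ncard hsubU (hfinU.subset diff_subset)
        have h2' : ((C₁ ∪ C₂) \ {g}).ncard < (C₁ ∪ C₂).ncard :=
          Set.ncard_diff_singleton_lt_of_mem (Or.inl hg1) hfinU
        omega
      obtain ⟨C, hC, heC, hfC, hCsub⟩ :=
        ih (C₃ ∪ C₃').ncard hlt C₃ C₃' le_rfl h3 h3' e f h heC₃ hfC₃' hhC₃ hhC₃'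
      exact ⟨C, hC, heC, hfC, hCsub.trans (hsubU.trans diff_subset)⟩
    · -- C₂ \ C₁ not ⊆ C₃' : get x ∈ C₂ \ C₁, x ∉ C₃'; use pair (C₁, C₃')
      obtain ⟨x, hx, hxC₃'⟩ := not_subset.mp hcase'
      have hsubU : C₁ ∪ C₃' ⊆ (C₁ ∪ C₂) \ {x} := by
        apply union_subset
        · intro y hy; exact ⟨Or.inl hy, by rintro rfl; exact hx.2 hy⟩
        · intro y hy
          refine ⟨?_, by rintro rfl; exact hxC₃' hy⟩
          have := (hC₃'sub hy).1
          rw [union_comm] at this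
          exact this
      have hlt : (C₁ ∪ C₃').ncard < n := by
        have h1' : (C₁ ∪ C₃').ncard ≤ ((C₁ ∪ C₂) \ {x}).ncard :=
          Set.ncard_le_ncard hsubU (hfinU.subset diff_subset)
        have h2' : ((C₁ ∪ C₂) \ {x}).ncard < (C₁ ∪ C₂).ncard :=
          Set.ncard_diff_singleton_lt_of_mem (Or.inr hx.1) hfinU
        omega
      obtain ⟨C, hC, heC, hfC, hCsub⟩ :=
        ih (C₁ ∪ C₃').ncard hlt C₁ C₃' le_rfl h1 h3' e f h' he hfC₃' hh'C₁ hh'C₃'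
      exact ⟨C, hC, heC, hfC, hCsub.trans (hsubU.trans diff_subset)⟩
  · -- C₁ \ C₂ not ⊆ C₃ : get x ∈ C₁ \ C₂, x ∉ C₃; use pair (C₃, C₂)
    obtain ⟨x, hx, hxC₃⟩ := not_subset.mp hcase
    have hsubU : C₃ ∪ C₂ ⊆ (C₁ ∪ C₂) \ {x} := by
      apply union_subset
      · intro y hy; exact ⟨(hC₃sub hy).1, by rintro rfl; exact hxC₃ hy⟩
      · intro y hy; exact ⟨Or.inr hy, by rintro rfl; exact hx.2 hy⟩
    have hlt : (C₃ ∪ C₂).ncard < n := by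
      have h1' : (C₃ ∪ C₂).ncard ≤ ((C₁ ∪ C₂) \ {x}).ncard :=
        Set.ncard_le_ncard hsubU (hfinU.subset diff_subset)
      have h2' : ((C₁ ∪ C₂) \ {x}).ncard < (C₁ ∪ C₂).ncard :=
        Set.ncard_diff_singleton_lt_of_mem (Or.inl hx.1) hfinU
      omega
    obtain ⟨C, hC, heC, hfC, hCsub⟩ :=
      ih (C₃ ∪ C₂).ncard hlt C₃ C₂ le_rfl h3 h2 e f h heC₃ hf hhC₃ hhC₂
    exact ⟨C, hC, heC, hfC, hCsub.trans (hsubU.trans diff_subset)⟩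

lemma circuit_trans (hE : M.E.Finite) {C₁ C₂ : Set α} (h1 : M.IsCircuit' C₁)
    (h2 : M.IsCircuit' C₂) {e f g : α} (he : e ∈ C₁) (hf : f ∈ C₂) (hg1 : g ∈ C₁)
    (hg2 : g ∈ C₂) :
    ∃ C, M.IsCircuit' C ∧ e ∈ C ∧ f ∈ C ∧ C ⊆ C₁ ∪ C₂ :=
  circuit_trans_aux hE (C₁ ∪ C₂).ncard C₁ C₂ le_rfl h1 h2 e f g he hf hg1 hg2

end Trans

section RankBound

variable {M : Matroid α} {X : Set (Set α)}

lemma rank_bound (hE : M.E.Finite) (hX : ∀ Y ∈ X, M.IsCircuit' Y) :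
    ∀ S : List (Set α), ProperSeq X S → ∀ B : Set α, unionList S ⊆ B → B ⊆ M.E →
      mrk M B + S.length ≤ B.ncard := by
  intro S
  induction S using List.reverseRecOn with
  | nil =>
    intro _ B _ hB
    simpa using mrk_le_ncard hE hB
  | append_singleton S Y ih =>
    intro hP B hUB hB
    obtain ⟨hPS, hYX, hlast⟩ := properSeq_append_last hP
    have hYcirc := hX Y hYX
    obtain ⟨e, heY, heS⟩ : ∃ e, e ∈ Y ∧ e ∉ unionList S := by
      rcases eq_or_ne S [] with rfl | hne
      · obtain ⟨e, he⟩ := circuit_nonempty hYcirc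
        exact ⟨e, he, by simp [unionList_nil]⟩
      · obtain ⟨e, he, hen⟩ := not_subset.mp (hlast hne)
        exact ⟨e, he, hen⟩
    have hYB : Y ⊆ B := by
      refine subset_trans ?_ hUB
      rw [unionList_append]
      exact subset_trans (by simp [unionList]) subset_union_right
    have heB : e ∈ B := hYB heY
    have hcl : e ∈ M.closure (B \ {e}) := by
      have h1 : Y \ {e} ⊆ B \ {e} := diff_subset_diff_left hYB
      exact M.closure_subset_closure h1 (circuit_mem_closure_diff hYcirc heY)
    have hrk : mrk M B = mrk M (B \ {e}) := mrk_diff_of_mem_closure hE hB hcl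
    have hUS : unionList S ⊆ B \ {e} := by
      intro x hx
      refine ⟨hUB ?_, by rintro rfl; exact heS hx⟩
      rw [unionList_append]
      exact Or.inl hx
    have hih := ih hPS (B \ {e}) hUS (diff_subset.trans hB)
    have hcard : (B \ {e}).ncard = B.ncard - 1 := Set.ncard_diff_singleton_of_mem heB
    have hBpos : 1 ≤ B.ncard := by
      have : ({e} : Set α).ncard ≤ B.ncard :=
        Set.ncard_le_ncard (singleton_subset_iff.mpr heB) (hE.subset hB)
      simpa using this
    simp only [List.length_append, List.length_singleton]
    omega

lemma mrk_le_valSeq (hE : M.E.Finite) (hX : ∀ Y ∈ X, M.IsCircuit' Y)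
    (hXE : ∀ Y ∈ X, Y ⊆ M.E) {F : Set α} (hF : F ⊆ M.E) {S : List (Set α)}
    (hS : ProperSeq X S) : (mrk M F : ℤ) ≤ valSeq F S := by
  have hU : unionList S ⊆ M.E := unionList_subset (fun Y hY => hXE Y (hS.1 Y hY))
  have hB : F ∪ unionList S ⊆ M.E := union_subset hF hU
  have h1 := rank_bound hE hX S hS (F ∪ unionList S) subset_union_right hB
  have h2 : mrk M F ≤ mrk M (F ∪ unionList S) := mrk_mono hE subset_union_left hB
  rw [valSeq]
  omega

end RankBound

section Sep

variable {M : Matroid α}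

lemma parts_flat (hE : M.E.Finite) (hloop : ∀ e ∈ M.E, M.Indep {e}) {F F₁ F₂ : Set α}
    (hF : F ⊆ M.E) (hflat : M.closure F = F) (hunion : F₁ ∪ F₂ = F) (hdisj : Disjoint F₁ F₂)
    (hadd : mrk M F = mrk M F₁ + mrk M F₂) :
    M.closure F₁ = F₁ ∧ M.closure F₂ = F₂ := by
  have hF₁ : F₁ ⊆ M.E := (subset_union_left.trans hunion.subset).trans hF
  have hF₂ : F₂ ⊆ M.E := (subset_union_right.trans hunion.subset).trans hF
  obtain ⟨B₁, hB₁⟩ := M.exists_isBasis F₁ hF₁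
  obtain ⟨B₂, hB₂⟩ := M.exists_isBasis F₂ hF₂
  have hBE : B₁ ∪ B₂ ⊆ M.E := union_subset hB₁.indep.subset_ground hB₂.indep.subset_ground
  have hFclB : F ⊆ M.closure (B₁ ∪ B₂) := by
    rw [← hunion]
    apply union_subset
    · exact hB₁.subset_closure.trans (M.closure_subset_closure subset_union_left)
    · exact hB₂.subset_closure.trans (M.closure_subset_closure subset_union_right)
  have h1 : mrk M F ≤ mrk M (B₁ ∪ B₂) := by
    calc mrk M F ≤ mrk M (M.closure (B₁ ∪ B₂)) :=
      mrk_mono hE hFclB (M.closure_subset_ground _)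
    _ = mrk M (B₁ ∪ B₂) := mrk_closure_eq hE hBE
  have h2 : mrk M (B₁ ∪ B₂) ≤ (B₁ ∪ B₂).ncard := mrk_le_ncard hE hBE
  have h3 : (B₁ ∪ B₂).ncard ≤ B₁.ncard + B₂.ncard := Set.ncard_union_le _ _
  have h4 : B₁.ncard + B₂.ncard = mrk M F := by
    rw [hadd, basis_ncard_eq_mrk hE hB₁, basis_ncard_eq_mrk hE hB₂]
  have hind : M.Indep (B₁ ∪ B₂) := indep_of_mrk_eq_ncard hE hBE (by omega)
  have hBdisj : B₁ ∩ B₂ = ∅ := (hdisj.mono hB₁.subset hB₂.subset).inter_eq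
  have hinter : M.closure B₁ ∩ M.closure B₂ = ∅ := by
    rw [← hind.closure_inter_eq_inter_closure, hBdisj, closure_empty_loopless hloop]
  constructor
  · apply subset_antisymm ?_ (M.subset_closure F₁ hF₁)
    intro x hx
    have hxF : x ∈ F := by
      rw [← hflat]
      exact M.closure_subset_closure (subset_union_left.trans hunion.subset) hx
    rw [← hunion] at hxF
    rcases hxF with h | h
    · exact h
    · exfalso
      have hx1 : x ∈ M.closure B₁ := by rwa [hB₁.closure_eq_closure]
      have hx2 : x ∈ M.closure B₂ := hB₂.subset_closure h
      exact absurd (mem_inter hx1 hx2) (by rw [hinter]; exact notMem_empty x)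
  · apply subset_antisymm ?_ (M.subset_closure F₂ hF₂)
    intro x hx
    have hxF : x ∈ F := by
      rw [← hflat]
      exact M.closure_subset_closure (subset_union_right.trans hunion.subset) hx
    rw [← hunion] at hxF
    rcases hxF with h | h
    · exfalso
      have hx2 : x ∈ M.closure B₂ := by rwa [hB₂.closure_eq_closure]
      have hx1 : x ∈ M.closure B₁ := hB₁.subset_closure h
      exact absurd (mem_inter hx1 hx2) (by rw [hinter]; exact notMem_empty x)
    · exact h

lemma sep (hE : M.E.Finite) (hloop : ∀ e ∈ M.E, M.Indep {e}) {F : Set α} (hF : F ⊆ M.E)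
    (hflat : M.closure F = F) (hdep : ¬ M.Indep F) (hconn : ¬ ConnectedSet M F) :
    ∃ F₁ F₂ : Set α, F₁ ∪ F₂ = F ∧ Disjoint F₁ F₂ ∧ F₁.Nonempty ∧ F₂.Nonempty ∧
      mrk M F = mrk M F₁ + mrk M F₂ ∧ M.closure F₁ = F₁ ∧ M.closure F₂ = F₂ := by
  have hFfin : F.Finite := hE.subset hF
  by_cases hall : ∀ x ∈ F, ∃ C, M.IsCircuit' C ∧ x ∈ C ∧ C ⊆ F
  · -- every element on a circuit; use the circuit-connectivity relation
    rw [ConnectedSet] at hconn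
    push_neg at hconn
    obtain ⟨e₀, he₀F, f₀, hf₀F, hno⟩ := hconn
    set F₁ : Set α := {y ∈ F | ∃ C, M.IsCircuit' C ∧ e₀ ∈ C ∧ y ∈ C ∧ C ⊆ F} with hF₁def
    set F₂ : Set α := F \ F₁ with hF₂def
    have hF₁F : F₁ ⊆ F := fun y hy => hy.1
    have hF₂F : F₂ ⊆ F := diff_subset
    have he₀ : e₀ ∈ F₁ := by
      obtain ⟨C, hC, he₀C, hCF⟩ := hall e₀ he₀F
      exact ⟨he₀F, C, hC, he₀C, he₀C, hCF⟩
    have hf₀ : f₀ ∈ F₂ := by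
      refine ⟨hf₀F, fun hf₀1 => ?_⟩
      obtain ⟨-, C, hC, he₀C, hf₀C, hCF⟩ := hf₀1
      exact (hno C hC he₀C hf₀C) hCF
    have hcross : ∀ C, M.IsCircuit' C → C ⊆ F → ∀ a ∈ C, a ∈ F₁ → ∀ b ∈ C, b ∈ F₁ := by
      intro C hC hCF a haC haF₁ b hbC
      obtain ⟨-, C', hC', he₀C', haC', hC'F⟩ := haF₁
      obtain ⟨D, hD, he₀D, hbD, hDsub⟩ :=
        circuit_trans hE hC' hC he₀C' hbC haC' haC
      exact ⟨hCF hbC, D, hD, he₀D, hbD, hDsub.trans (union_subset hC'F hCF)⟩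
    obtain ⟨B₁, hB₁⟩ := M.exists_isBasis F₁ (hF₁F.trans hF)
    obtain ⟨B₂, hB₂⟩ := M.exists_isBasis F₂ (hF₂F.trans hF)
    have hdisj : Disjoint F₁ F₂ := disjoint_sdiff_right
    have hBdisj : Disjoint B₁ B₂ := hdisj.mono hB₁.subset hB₂.subset
    have hBsub : B₁ ∪ B₂ ⊆ F := union_subset (hB₁.subset.trans hF₁F) (hB₂.subset.trans hF₂F)
    have hind : M.Indep (B₁ ∪ B₂) := by
      by_contra hd
      obtain ⟨C, hCsub, hC⟩ := exists_circuit_subset hE (hBsub.trans hF) hd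
      have hCF : C ⊆ F := hCsub.trans hBsub
      obtain ⟨c, hc⟩ := circuit_nonempty hC
      rcases hCsub hc with hc1 | hc2
      · -- c ∈ B₁ ⊆ F₁, so C ⊆ F₁, so C ⊆ B₁
        have hcF₁ : c ∈ F₁ := hB₁.subset hc1
        have hCF₁ : C ⊆ F₁ := fun b hb => hcross C hC hCF c hc hcF₁ b hb
        have hCB₁ : C ⊆ B₁ := by
          intro x hx
          rcases hCsub hx with h | h
          · exact h
          · exact absurd (hB₂.subset h) (fun h2 => h2.2 (hCF₁ hx))
        exact hC.2.1 (hB₁.indep.subset hCB₁)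
      · have hcF₂ : c ∈ F₂ := hB₂.subset hc2
        have hCF₂ : C ⊆ F₂ := by
          intro b hb
          refine ⟨hCF hb, fun hbF₁ => ?_⟩
          exact hcF₂.2 (hcross C hC hCF b hb hbF₁ c hc)
        have hCB₂ : C ⊆ B₂ := by
          intro x hx
          rcases hCsub hx with h | h
          · exact absurd (hB₁.subset h) (fun h1 => (hCF₂ hx).2 h1)
          · exact h
        exact hC.2.1 (hB₂.indep.subset hCB₂)
    have hbasis : M.IsBasis (B₁ ∪ B₂) F := by
      rw [Matroid.isBasis_iff_indep_subset_closure]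
      refine ⟨hind, hBsub, ?_⟩
      intro x hxF
      rcases (by rw [union_diff_cancel hF₁F]; exact hxF :
          x ∈ F₁ ∪ (F \ F₁)) with h | h
      · exact (hB₁.subset_closure.trans (M.closure_subset_closure subset_union_left)) h
      · exact (hB₂.subset_closure.trans (M.closure_subset_closure subset_union_right)) h
    have hadd : mrk M F = mrk M F₁ + mrk M F₂ := by
      rw [basis_ncard_eq_mrk hE hbasis, basis_ncard_eq_mrk hE hB₁, basis_ncard_eq_mrk hE hB₂,
        Set.ncard_union_eq hBdisj (hFfin.subset (hB₁.subset.trans hF₁F))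
          (hFfin.subset (hB₂.subset.trans hF₂F))]
    have hflats := parts_flat hE hloop hF hflat (union_diff_cancel hF₁F) hdisj hadd
    exact ⟨F₁, F₂, union_diff_cancel hF₁F, hdisj, ⟨e₀, he₀⟩, ⟨f₀, hf₀⟩, hadd,
      hflats.1, hflats.2⟩
  · -- some element on no circuit within F
    push_neg at hall
    obtain ⟨x, hxF, hx⟩ := hall
    obtain ⟨I, hI⟩ := M.exists_isBasis (F \ {x}) (diff_subset.trans hF)
    have hxI : x ∉ I := fun h => (hI.subset h).2 rfl
    have hxcl : x ∉ M.closure (F \ {x}) := by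
      intro hcl
      rw [← hI.closure_eq_closure] at hcl
      obtain ⟨C, hC, hxC, hCsub⟩ := exists_fund_circuit hE hI.indep hcl hxI
      have hCF : C ⊆ F := hCsub.trans
        (insert_subset hxF (hI.subset.trans diff_subset))
      exact hx C hC hxC hCF
    have hins : M.Indep (insert x I) := by
      rw [hI.indep.insert_indep_iff_of_notMem hxI]
      exact ⟨hF hxF, fun h => hxcl (hI.closure_eq_closure ▸ h)⟩
    have hbasis : M.IsBasis (insert x I) F := by
      rw [Matroid.isBasis_iff_indep_subset_closure]
      refine ⟨hins, insert_subset hxF (hI.subset.trans diff_subset), ?_⟩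
      intro y hyF
      rcases eq_or_ne y x with rfl | hne
      · exact M.subset_closure _ hins.subset_ground (mem_insert y I)
      · have : y ∈ M.closure I := hI.closure_eq_closure ▸ hI.subset_closure ⟨hyF, hne⟩
        exact M.closure_subset_closure (subset_insert x I) this
    have hadd : mrk M F = mrk M (F \ {x}) + mrk M {x} := by
      rw [basis_ncard_eq_mrk hE hbasis, basis_ncard_eq_mrk hE hI,
        indep_mrk hE (hloop x (hF hxF)),
        Set.ncard_insert_of_notMem hxI (hFfin.subset (hI.subset.trans diff_subset)),
        Set.ncard_singleton]
    have hne₁ : (F \ {x}).Nonempty := by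
      by_contra h
      rw [not_nonempty_iff_eq_empty, diff_eq_empty] at h
      have : F = {x} := subset_antisymm h (singleton_subset_iff.mpr hxF)
      exact hdep (this ▸ hloop x (hF hxF))
    have hdisj : Disjoint (F \ {x}) {x} := disjoint_singleton_right.mpr (fun h => h.2 rfl)
    have huni : (F \ {x}) ∪ {x} = F := by
      rw [union_comm, ← insert_eq, insert_diff_singleton, insert_eq_of_mem hxF]
    have hflats := parts_flat hE hloop hF hflat huni hdisj hadd
    exact ⟨F \ {x}, {x}, huni, hdisj, hne₁, singleton_nonempty x, hadd, hflats.1, hflats.2⟩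

end Sep

section Main

variable {M : Matroid α} {X : Set (Set α)}

lemma main_exists (hE : M.E.Finite) (hX : ∀ Y ∈ X, M.IsCircuit' Y)
    (hXE : ∀ Y ∈ X, Y ⊆ M.E) (hloop : ∀ e ∈ M.E, M.Indep {e})
    (hflats : ∀ F ⊆ M.E, M.closure F = F → ConnectedSet M F →
      ∃ S : List (Set α), ProperSeq X S ∧ (mrk M F : ℤ) = valSeq F S) :
    ∀ n : ℕ, ∀ F ⊆ M.E, mrk M F * (M.E.ncard + 1) + (M.E \ F).ncard ≤ n →
      ∃ S : List (Set α), ProperSeq X S ∧ valSeq F S ≤ (mrk M F : ℤ) := by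
  intro n
  induction n using Nat.strong_induction_on with
  | _ n ih =>
  intro F hF hmeas
  by_cases hind : M.Indep F
  · refine ⟨[], properSeq_nil, ?_⟩
    rw [valSeq, unionList_nil, union_empty, indep_mrk hE hind]
    simp
  by_cases hflat : M.closure F = F
  · by_cases hconn : ConnectedSet M F
    · obtain ⟨S, hS, heq⟩ := hflats F hF hflat hconn
      exact ⟨S, hS, le_of_eq heq.symm⟩
    · -- separation case
      obtain ⟨F₁, F₂, huni, hdisj, hne₁, hne₂, hadd, hflat₁, hflat₂⟩ :=
        sep hE hloop hF hflat hind hconn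
      have hF₁ : F₁ ⊆ M.E := (subset_union_left.trans huni.subset).trans hF
      have hF₂ : F₂ ⊆ M.E := (subset_union_right.trans huni.subset).trans hF
      have hr₁ : 1 ≤ mrk M F₁ := mrk_pos_of_loopless hE hF₁ hloop hne₁
      have hr₂ : 1 ≤ mrk M F₂ := mrk_pos_of_loopless hE hF₂ hloop hne₂
      have hdiffle : ∀ G : Set α, (M.E \ G).ncard ≤ M.E.ncard :=
        fun G => Set.ncard_le_ncard diff_subset hE
      have hmeaslt : ∀ G : Set α, G ⊆ M.E → mrk M G + 1 ≤ mrk M F →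
          mrk M G * (M.E.ncard + 1) + (M.E \ G).ncard < n := by
        intro G hG h5
        calc mrk M G * (M.E.ncard + 1) + (M.E \ G).ncard
            ≤ mrk M G * (M.E.ncard + 1) + M.E.ncard := by
              have := hdiffle G; omega
        _ < (mrk M G + 1) * (M.E.ncard + 1) := by rw [add_mul, one_mul]; omega
        _ ≤ mrk M F * (M.E.ncard + 1) := Nat.mul_le_mul_right _ h5
        _ ≤ n := le_trans (Nat.le_add_right _ _) hmeas
      obtain ⟨S₁, hS₁, hval₁⟩ := ih _ (hmeaslt F₁ hF₁ (by omega)) F₁ hF₁ le_rfl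
      obtain ⟨S₂, hS₂, hval₂⟩ := ih _ (hmeaslt F₂ hF₂ (by omega)) F₂ hF₂ le_rfl
      -- derive that the unions lie inside the parts
      have hUsub : ∀ (S : List (Set α)) (G : Set α), ProperSeq X S → G ⊆ M.E →
          M.closure G = G → valSeq G S ≤ (mrk M G : ℤ) → unionList S ⊆ G := by
        intro S G hS hG hGflat hval
        have hU : unionList S ⊆ M.E := unionList_subset (fun Y hY => hXE Y (hS.1 Y hY))
        have hGU : G ∪ unionList S ⊆ M.E := union_subset hG hU
        have hb := rank_bound hE hX S hS (G ∪ unionList S) subset_union_right hGU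
        have hval' : ((G ∪ unionList S).ncard : ℤ) ≤ (mrk M G : ℤ) + S.length := by
          rw [valSeq] at hval; omega
        have hval'' : (G ∪ unionList S).ncard ≤ mrk M G + S.length := by exact_mod_cast hval'
        have h6 : mrk M (G ∪ unionList S) ≤ mrk M G := by omega
        have h7 := subset_closure_of_mrk_le hE subset_union_left hGU h6
        rw [hGflat] at h7
        exact subset_union_right.trans h7
      have hU₁ : unionList S₁ ⊆ F₁ := hUsub S₁ F₁ hS₁ hF₁ hflat₁ hval₁
      have hU₂ : unionList S₂ ⊆ F₂ := hUsub S₂ F₂ hS₂ hF₂ hflat₂ hval₂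
      have hprop : ProperSeq X (S₁ ++ S₂) :=
        properSeq_append hS₁ hS₂ (fun Y hY => circuit_nonempty (hX Y (hS₂.1 Y hY)))
          hU₁ hU₂ hdisj
      refine ⟨S₁ ++ S₂, hprop, ?_⟩
      have hcard : F.ncard = F₁.ncard + F₂.ncard := by
        rw [← huni]
        exact Set.ncard_union_eq hdisj (hE.subset hF₁) (hE.subset hF₂)
      have e0 : F ∪ unionList (S₁ ++ S₂) = F := by
        rw [unionList_append]
        apply union_eq_left.mpr
        apply union_subset
        · exact hU₁.trans (subset_union_left.trans huni.subset)
        · exact hU₂.trans (subset_union_right.trans huni.subset)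
      have e1 : F₁ ∪ unionList S₁ = F₁ := union_eq_left.mpr hU₁
      have e2 : F₂ ∪ unionList S₂ = F₂ := union_eq_left.mpr hU₂
      rw [valSeq, e0, List.length_append]
      rw [valSeq, e1] at hval₁
      rw [valSeq, e2] at hval₂
      have hadd' : (mrk M F : ℤ) = mrk M F₁ + mrk M F₂ := by exact_mod_cast hadd
      have hcard' : (F.ncard : ℤ) = F₁.ncard + F₂.ncard := by exact_mod_cast hcard
      push_cast
      omega
  · -- F is not a flat : pass to the closure
    set F' := M.closure F with hF'def
    have hFF' : F ⊆ F' := M.subset_closure F hF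
    have hF'E : F' ⊆ M.E := M.closure_subset_ground F
    have hssub : M.E \ F' ⊂ M.E \ F := by
      refine ssubset_of_subset_of_ne (diff_subset_diff_right hFF') ?_
      intro h
      apply hflat
      apply subset_antisymm ?_ hFF'
      intro y hy
      by_contra hyF
      have : y ∈ M.E \ F := ⟨hF'E hy, hyF⟩
      rw [← h] at this
      exact this.2 hy
    have hlt : (M.E \ F').ncard < (M.E \ F).ncard :=
      Set.ncard_lt_ncard hssub (hE.subset diff_subset)
    have hrk : mrk M F' = mrk M F := mrk_closure_eq hE hF
    obtain ⟨S, hS, hval⟩ := ih (mrk M F' * (M.E.ncard + 1) + (M.E \ F').ncard)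
      (by rw [hrk]; omega) F' hF'E le_rfl
    refine ⟨S, hS, ?_⟩
    have hU : unionList S ⊆ M.E := unionList_subset (fun Y hY => hXE Y (hS.1 Y hY))
    have hmono : (F ∪ unionList S).ncard ≤ (F' ∪ unionList S).ncard :=
      Set.ncard_le_ncard (union_subset_union_left _ hFF')
        (hE.subset (union_subset hF'E hU))
    rw [valSeq] at hval ⊢
    rw [hrk] at hval
    omega

end Main

theorem connected_flat_criterion (E : Set α) (hE : E.Finite) (X : Set (Set α))
    (hXE : ∀ Y ∈ X, Y ⊆ E) (M : Matroid α) (hM : IsXMatroid E X M)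
    (hloopless : ∀ e ∈ E, M.Indep {e})
    (hflats : ∀ F ⊆ E, M.closure F = F → ConnectedSet M F →
      ∃ S : List (Set α), ProperSeq X S ∧ (mrk M F : ℤ) = valSeq F S) :
    (∀ F ⊆ E, (mrk M F : ℤ) = valX X F) ∧
    ∀ N : Matroid α, IsXMatroid E X N → WeakLE N M := by
  obtain ⟨hME, hMX⟩ := hM
  subst hME
  have hpart1 : ∀ F ⊆ M.E, (mrk M F : ℤ) = valX X F := by
    intro F hF
    obtain ⟨S, hS, hval⟩ := main_exists hE hMX hXE hloopless hflats
      (mrk M F * (M.E.ncard + 1) + (M.E \ F).ncard) F hF le_rfl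
    have hge : ∀ v ∈ {v : ℤ | ∃ S : List (Set α), ProperSeq X S ∧ v = valSeq F S},
        (mrk M F : ℤ) ≤ v := by
      rintro v ⟨S', hS', rfl⟩
      exact mrk_le_valSeq hE hMX hXE hF hS'
    have heq : (mrk M F : ℤ) = valSeq F S :=
      le_antisymm (mrk_le_valSeq hE hMX hXE hF hS) hval
    rw [valX]
    apply le_antisymm
    · exact le_csInf ⟨valSeq F S, S, hS, rfl⟩ hge
    · exact csInf_le ⟨(mrk M F : ℤ), hge⟩ ⟨S, hS, heq⟩
  refine ⟨hpart1, ?_⟩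
  rintro N ⟨hNE, hNX⟩ I hI
  have hIE : I ⊆ M.E := by rw [← hNE]; exact hI.subset_ground
  have hNfin : N.E.Finite := by rw [hNE]; exact hE
  have hXE' : ∀ Y ∈ X, Y ⊆ N.E := by rw [hNE]; exact hXE
  have h1 : (I.ncard : ℤ) ≤ valX X I := by
    rw [valX]
    refine le_csInf ⟨valSeq I [], [], properSeq_nil, rfl⟩ ?_
    rintro v ⟨S, hS, rfl⟩
    have := mrk_le_valSeq (F := I) hNfin hNX hXE' (by rw [hNE]; exact hIE) hS
    rwa [indep_mrk hNfin hI] at this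
  have h2 : (mrk M I : ℤ) = valX X I := hpart1 I hIE
  have h3 : mrk M I ≤ I.ncard := mrk_le_ncard hE hIE
  have h4 : I.ncard ≤ mrk M I := by
    have : (I.ncard : ℤ) ≤ (mrk M I : ℤ) := h2 ▸ h1
    exact_mod_cast this
  exact indep_of_mrk_eq_ncard hE hIE h4
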